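/- Assume V is radially unbounded (V(y) → +∞ as ‖y‖ → ∞) and let G_V = {y* ∈ ℝ^m : V(y*) ≤ V(y) for all y ∈ ℝ^m} be its (nonempty) set of global minima. Then G_V is stable for both the LCR and the LCM algorithms: for every ε > 0 there exists r > 0 such that for any sequence (y_n) generated by LCR or LCM, if dist(y_0, G_V) < r then dist(y_n, G_V) < ε for all n ≥ 0. -/

import Mathlib

open Filter

/-- The Lyapunov derivative `V̇(y) = ⟪∇V(y), F(y)⟫`. -/
noncomputable def lyapDeriv {m : ℕ}
    (F : EuclideanSpace ℝ (Fin m) → EuclideanSpace ℝ (Fin m))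
    (V : EuclideanSpace ℝ (Fin m) → ℝ) (y : EuclideanSpace ℝ (Fin m)) : ℝ :=
  inner ℝ (gradient V y) (F y)

/-- `f(y,η) = V(y + η F(y)) − V(y) − λ η V̇(y)`. -/
noncomputable def armijoGap {m : ℕ}
    (F : EuclideanSpace ℝ (Fin m) → EuclideanSpace ℝ (Fin m))
    (V : EuclideanSpace ℝ (Fin m) → ℝ) (lam : ℝ)
    (y : EuclideanSpace ℝ (Fin m)) (η : ℝ) : ℝ :=
  V (y + η • F y) - V y - lam * η * lyapDeriv F V y

/-- The LCR algorithm. -/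
def IsLCR {m : ℕ}
    (F : EuclideanSpace ℝ (Fin m) → EuclideanSpace ℝ (Fin m))
    (V : EuclideanSpace ℝ (Fin m) → ℝ) (lam ηinit f1 : ℝ)
    (y : ℕ → EuclideanSpace ℝ (Fin m)) (η : ℕ → ℝ) : Prop :=
  ∀ n, y (n + 1) = y n + η n • F (y n) ∧
    ∃ p : ℕ, η n = ηinit / f1 ^ p ∧
      armijoGap F V lam (y n) (η n) ≤ 0 ∧
      ∀ k < p, ¬ armijoGap F V lam (y n) (ηinit / f1 ^ k) ≤ 0

/-- The LCM algorithm (convention `η_{-1} = η_init / f2`). -/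
def IsLCM {m : ℕ}
    (F : EuclideanSpace ℝ (Fin m) → EuclideanSpace ℝ (Fin m))
    (V : EuclideanSpace ℝ (Fin m) → ℝ) (lam ηinit f1 f2 : ℝ)
    (y : ℕ → EuclideanSpace ℝ (Fin m)) (η : ℕ → ℝ) : Prop :=
  ∀ n, y (n + 1) = y n + η n • F (y n) ∧
    ∃ p : ℕ, η n = (if n = 0 then ηinit else f2 * η (n - 1)) / f1 ^ p ∧
      armijoGap F V lam (y n) (η n) ≤ 0 ∧
      ∀ k < p, ¬ armijoGap F V lam (y n) ((if n = 0 then ηinit else f2 * η (n - 1)) / f1 ^ k) ≤ 0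

/-- **Stability of the set of global minima.** If `V` is radially unbounded, then its
(nonempty) set of global minima `G_V` is stable for both the LCR and the LCM algorithms. -/
theorem global_minima_stable
    {m : ℕ} (lam ηinit f1 f2 : ℝ)
    (hlam : lam ∈ Set.Ioo (0 : ℝ) 1) (hηinit : 0 < ηinit) (hf1 : 1 < f1) (hf2 : 1 < f2)
    (F : EuclideanSpace ℝ (Fin m) → EuclideanSpace ℝ (Fin m))
    (V : EuclideanSpace ℝ (Fin m) → ℝ)
    (hF : Continuous F) (hV : ContDiff ℝ 2 V) (hV0 : ∀ y, 0 ≤ V y)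
    (hVdot : ∀ y, lyapDeriv F V y ≤ 0)
    (hrad : ∀ C : ℝ, ∃ Rr : ℝ, ∀ y : EuclideanSpace ℝ (Fin m), Rr ≤ ‖y‖ → C ≤ V y)
    (G : Set (EuclideanSpace ℝ (Fin m)))
    (hG : G = {ystar | ∀ y, V ystar ≤ V y}) (hGne : G.Nonempty) :
    ∀ ε > 0, ∃ r > 0, ∀ (y : ℕ → EuclideanSpace ℝ (Fin m)) (η : ℕ → ℝ),
      (IsLCR F V lam ηinit f1 y η ∨ IsLCM F V lam ηinit f1 f2 y η) →
      Metric.infDist (y 0) G < r →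
      ∀ n : ℕ, Metric.infDist (y n) G < ε := by

  obtain ⟨hlam0, hlam1⟩ := hlam
  intro ε hε
  obtain ⟨ystar, hystar⟩ := hGne
  have hmin : ∀ y, V ystar ≤ V y := by rw [hG] at hystar; exact hystar
  set Vmin := V ystar with hVm
  have hVc : Continuous V := hV.continuous
  have hGeq : G = V ⁻¹' Set.Iic Vmin := by
    ext z
    simp only [hG, Set.mem_setOf_eq, Set.mem_preimage, Set.mem_Iic]
    exact ⟨fun h => h ystar, fun h w => h.trans (hmin w)⟩
  have hGclosed : IsClosed G := hGeq ▸ (isClosed_Iic.preimage hVc)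
  obtain ⟨R0, hR0⟩ := hrad (Vmin + 1)
  have hGcompact : IsCompact G := by
    refine (isCompact_closedBall (0 : EuclideanSpace ℝ (Fin m)) R0).of_isClosed_subset
      hGclosed ?_
    intro z hz
    simp only [Metric.mem_closedBall, dist_zero_right]
    by_contra h
    push_neg at h
    have h1 := hR0 z h.le
    have h2 : V z ≤ Vmin := by rw [hGeq] at hz; exact hz
    linarith
  obtain ⟨R, hR⟩ := hrad (Vmin + 1)
  have hc' : ∃ c', Vmin < c' ∧ ∀ z, ε ≤ Metric.infDist z G → c' ≤ V z := by
    set S : Set (EuclideanSpace ℝ (Fin m)) :=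
      {z | ε ≤ Metric.infDist z G} ∩ {z | ‖z‖ ≤ R} with hS
    have hSclosed : IsClosed S :=
      (isClosed_le continuous_const (Metric.continuous_infDist_pt G)).inter
        (isClosed_le continuous_norm continuous_const)
    have hScompact : IsCompact S := by
      refine (isCompact_closedBall (0 : EuclideanSpace ℝ (Fin m)) R).of_isClosed_subset
        hSclosed ?_
      intro z hz
      simpa [Metric.mem_closedBall, dist_zero_right] using hz.2
    rcases S.eq_empty_or_nonempty with hSe | hSne
    · refine ⟨Vmin + 1, by linarith, ?_⟩
      intro z hz
      rcases le_or_gt ‖z‖ R with h | h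
      · exact absurd (show z ∈ S from ⟨hz, h⟩) (by simp [hSe])
      · exact hR z h.le
    · obtain ⟨w, hwS, hw⟩ := hScompact.exists_isMinOn hSne hVc.continuousOn
      have hwG : Vmin < V w := by
        rcases lt_or_ge Vmin (V w) with h | h
        · exact h
        · exfalso
          have hwmem : w ∈ G := by rw [hGeq]; exact h
          have h0 : Metric.infDist w G = 0 := Metric.infDist_zero_of_mem hwmem
          have h1 : ε ≤ Metric.infDist w G := hwS.1
          rw [h0] at h1
          linarith
      refine ⟨min (V w) (Vmin + 1), lt_min hwG (by linarith), ?_⟩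
      intro z hz
      rcases le_or_gt ‖z‖ R with h | h
      · exact (min_le_left _ _).trans ((isMinOn_iff.mp hw) z ⟨hz, h⟩)
      · exact (min_le_right _ _).trans (hR z h.le)
  obtain ⟨c', hc'1, hc'2⟩ := hc'
  have hU : IsOpen {z | V z < c'} := isOpen_lt hVc continuous_const
  have hGU : G ⊆ {z | V z < c'} := by
    intro z hz
    have : V z ≤ Vmin := by rw [hGeq] at hz; exact hz
    exact lt_of_le_of_lt this hc'1
  obtain ⟨r, hrpos, hrsub⟩ := hGcompact.exists_thickening_subset_open hU hGU
  refine ⟨r, hrpos, ?_⟩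
  intro y η halg hy0 n
  have hf1pos : (0:ℝ) < f1 := lt_trans one_pos hf1
  have hf2pos : (0:ℝ) < f2 := lt_trans one_pos hf2
  have hkey : ∀ k, 0 < η k ∧ y (k+1) = y k + η k • F (y k) ∧
      armijoGap F V lam (y k) (η k) ≤ 0 := by
    rcases halg with hlcr | hlcm
    · intro k
      obtain ⟨hstep, p, heq, hgap, -⟩ := hlcr k
      refine ⟨?_, hstep, hgap⟩
      rw [heq]
      exact div_pos hηinit (pow_pos hf1pos p)
    · have hpos : ∀ k, 0 < η k := by
        intro k
        induction k with
        | zero =>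
          obtain ⟨-, p, heq, -, -⟩ := hlcm 0
          rw [heq, if_pos rfl]
          exact div_pos hηinit (pow_pos hf1pos p)
        | succ j ih =>
          obtain ⟨-, p, heq, -, -⟩ := hlcm (j+1)
          rw [heq, if_neg (Nat.succ_ne_zero j), Nat.add_sub_cancel]
          exact div_pos (mul_pos hf2pos ih) (pow_pos hf1pos p)
      intro k
      obtain ⟨hstep, p, heq, hgap, -⟩ := hlcm k
      exact ⟨hpos k, hstep, hgap⟩
  have hdesc : ∀ k, V (y (k+1)) ≤ V (y k) := by
    intro k
    obtain ⟨hηk, hstep, hgap⟩ := hkey k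
    simp only [armijoGap] at hgap
    have h2 : lam * η k * lyapDeriv F V (y k) ≤ 0 :=
      mul_nonpos_of_nonneg_of_nonpos (by positivity) (hVdot _)
    rw [hstep]
    linarith
  have hmono : ∀ k, V (y k) ≤ V (y 0) := by
    intro k
    induction k with
    | zero => exact le_refl _
    | succ j ih => exact (hdesc j).trans ih
  have hy0V : V (y 0) < c' := by
    have hmem : y 0 ∈ Metric.thickening r G :=
      (Metric.mem_thickening_iff_infDist_lt ⟨ystar, show ystar ∈ G by rw [hGeq]; exact le_refl Vmin⟩).mpr hy0
    exact hrsub hmem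
  by_contra h
  push_neg at h
  have h1 := hc'2 (y n) h
  have h2 := hmono n
  linarith
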